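/- Let φ = (1+√5)/2 be the golden ratio. For all natural numbers x, y, all natural numbers ñ ≥ 3 and l ≥ 1, we have 2·(x·F_{l+2}·F_{ñ} + y·(F_{l+1}·F_{ñ} + F_{l+2}·F_{ñ−1})) ≥ 2·(x + y)·φ^{l+ñ−2}, where F denotes the Fibonacci sequence (viewed as a real number). -/

import Mathlib

open Real in
lemma gold_pow_le_fib (k : ℕ) : goldenRatio ^ k ≤ (Nat.fib (k + 2) : ℝ) := by
  induction k using Nat.strong_induction_on with
  | _ k ih =>
    match k with
    | 0 => norm_num
    | 1 =>
      simp only [pow_one]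
      have h9 : Real.sqrt 5 ≤ 3 := by
        nlinarith [Real.sq_sqrt (by norm_num : (5:ℝ) ≥ 0), Real.sqrt_nonneg 5]
      norm_num [goldenRatio]
      linarith
    | (k+2) =>
      have h1 := ih k (by omega)
      have h2 := ih (k+1) (by omega)
      have hφ : goldenRatio ^ (k + 2) = goldenRatio ^ (k+1) + goldenRatio ^ k := by
        have hs := goldenRatio_sq
        calc goldenRatio ^ (k+2) = goldenRatio ^ k * goldenRatio ^ 2 := by ring
        _ = goldenRatio ^ k * (goldenRatio + 1) := by rw [hs]
        _ = goldenRatio ^ (k+1) + goldenRatio ^ k := by ring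
      rw [hφ, show k + 2 + 2 = (k+2) + 2 from rfl, Nat.fib_add_two (n := k+2)]
      push_cast
      linarith

open Real in
lemma gold_key : ((1 + Real.sqrt 5) / 2 : ℝ) = goldenRatio := rfl

theorem inductive_step_inequality (x y : ℕ) (n' l : ℕ) (hn' : 3 ≤ n') (hl : 1 ≤ l) :
    let φ : ℝ := (1 + Real.sqrt 5) / 2
    2 * ((x : ℝ) * Nat.fib (l+2) * Nat.fib n' +
        (y : ℝ) * (Nat.fib (l+1) * Nat.fib n' + Nat.fib (l+2) * Nat.fib (n'-1))) ≥
      2 * ((x : ℝ) + (y : ℝ)) * φ ^ (l + n' - 2) := by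
  intro φ
  have hφ : φ = Real.goldenRatio := rfl
  obtain ⟨m, rfl⟩ : ∃ m, n' = m + 3 := ⟨n' - 3, by omega⟩
  obtain ⟨j, rfl⟩ : ∃ j, l = j + 1 := ⟨l - 1, by omega⟩
  have hexp : j + 1 + (m + 3) - 2 = (j + m + 2) := by omega
  have hsub : m + 3 - 1 = m + 2 := by omega
  rw [hexp, hsub, hφ]
  have h1 : Real.goldenRatio ^ (j + m + 2) ≤ (Nat.fib (j+1+2) : ℝ) * Nat.fib (m+3) := by
    calc Real.goldenRatio ^ (j + m + 2) = Real.goldenRatio ^ (j+1) * Real.goldenRatio ^ (m+1) := by ring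
    _ ≤ (Nat.fib (j+1+2) : ℝ) * Nat.fib (m+1+2) := by
        apply mul_le_mul (gold_pow_le_fib _) (gold_pow_le_fib _)
          (pow_nonneg Real.goldenRatio_pos.le _) (Nat.cast_nonneg _)
  have h2 : Real.goldenRatio ^ (j + m + 2) ≤
      (Nat.fib (j+1+1) : ℝ) * Nat.fib (m+3) + Nat.fib (j+1+2) * Nat.fib (m+2) := by
    have hfib : (Nat.fib (j+1+1) : ℝ) * Nat.fib (m+3) + Nat.fib (j+1+2) * Nat.fib (m+2)
        ≥ (Nat.fib (j+2) : ℝ) * (Nat.fib (m+3) + Nat.fib (m+2)) := by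
      have : Nat.fib (j+2) ≤ Nat.fib (j+3) := Nat.fib_le_fib_succ
      have hm : (0:ℝ) ≤ Nat.fib (m+2) := Nat.cast_nonneg _
      have hc : (Nat.fib (j+2) : ℝ) ≤ Nat.fib (j+3) := Nat.cast_le.mpr this
      nlinarith
    have hsum : (Nat.fib (m+3) : ℝ) + Nat.fib (m+2) = Nat.fib (m+4) := by
      rw [show m + 4 = (m+2)+2 from rfl, Nat.fib_add_two (n := m+2)]; push_cast; ring
    calc Real.goldenRatio ^ (j + m + 2) = Real.goldenRatio ^ j * Real.goldenRatio ^ (m+2) := by ring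
    _ ≤ (Nat.fib (j+2) : ℝ) * Nat.fib (m+2+2) := by
        apply mul_le_mul (gold_pow_le_fib _) (gold_pow_le_fib _)
          (pow_nonneg Real.goldenRatio_pos.le _) (Nat.cast_nonneg _)
    _ = (Nat.fib (j+2) : ℝ) * (Nat.fib (m+3) + Nat.fib (m+2)) := by rw [hsum]
    _ ≤ _ := hfib
  have hx : (0:ℝ) ≤ x := Nat.cast_nonneg _
  have hy : (0:ℝ) ≤ y := Nat.cast_nonneg _
  nlinarith [mul_le_mul_of_nonneg_left h1 hx, mul_le_mul_of_nonneg_left h2 hy]
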